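/- arXiv:1703.06604 — 4 statements merged into one kernel-verified Lean document; each statement's English description precedes it below -/
import Mathlib

section
/- Let z⁽¹⁾, …, z⁽ᵈ⁾ be distinct points of ℂⁿ. Then the truncated Veronese vectors v_{d-1}(z⁽¹⁾), …, v_{d-1}(z⁽ᵈ⁾) are linearly independent, where v_{d-1}(z) = (z^α)_{|α| ≤ d-1} is the vector of all monomials of total degree at most d-1 evaluated at z. -/
open MvPolynomial Finset

theorem veronese_vectors_linearly_independent
    (n d : ℕ) (z : Fin d → (Fin n → ℂ)) (hz : Function.Injective z) :
    LinearIndependent ℂ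
      (fun k : Fin d =>
        (fun α : {α : Fin n → ℕ // ∑ i, α i ≤ d - 1} =>
          ∏ i, (z k i) ^ (α.1 i))) := by
  rw [Fintype.linearIndependent_iff]
  intro c hc k₀
  -- pointwise hypothesis
  have hpt : ∀ α : Fin n → ℕ, (∑ i, α i) ≤ d - 1 →
      ∑ k, c k * ∏ i, (z k i) ^ (α i) = 0 := by
    intro α hα
    have := congrFun hc ⟨α, hα⟩
    simpa using this
  -- the key lemma: the linear relation holds for evaluation of any polynomial
  -- of total degree ≤ d - 1
  have key : ∀ p : MvPolynomial (Fin n) ℂ, p.totalDegree ≤ d - 1 →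
      ∑ k, c k * eval (z k) p = 0 := by
    intro p hp
    have heval : ∀ k, eval (z k) p
        = ∑ α ∈ p.support, coeff α p * ∏ i, (z k i) ^ (α i) := by
      intro k; rw [eval_eq']
    simp_rw [heval, Finset.mul_sum]
    rw [Finset.sum_comm]
    refine Finset.sum_eq_zero fun α hα => ?_
    have h1 : (∑ i, α i) ≤ d - 1 := by
      calc (∑ i, α i) = α.sum fun _ m => m :=
            (Finsupp.sum_fintype α (fun _ m => m) fun _ => rfl).symm
        _ ≤ p.totalDegree := MvPolynomial.le_totalDegree hα
        _ ≤ d - 1 := hp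
    calc ∑ k, c k * (coeff α p * ∏ i, z k i ^ α i)
        = coeff α p * ∑ k, c k * ∏ i, z k i ^ α i := by
          rw [Finset.mul_sum]; exact Finset.sum_congr rfl fun _ _ => by ring
      _ = 0 := by rw [hpt α h1, mul_zero]
  -- choose separating coordinates
  have hne : ∀ j ∈ Finset.univ.erase k₀, ∃ i, z j i ≠ z k₀ i := by
    intro j hj
    by_contra h
    push_neg at h
    exact (Finset.mem_erase.mp hj).1 (hz (funext h))
  choose i hi using hne
  -- the interpolating polynomial
  set p : MvPolynomial (Fin n) ℂ :=
    ∏ j ∈ (Finset.univ.erase k₀).attach,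
      (X (i j.1 j.2) - C (z j.1 (i j.1 j.2))) with hpdef
  have hdeg : p.totalDegree ≤ d - 1 := by
    refine le_trans (MvPolynomial.totalDegree_finset_prod _ _) ?_
    have hfac : ∀ j ∈ (Finset.univ.erase k₀).attach,
        (X (i j.1 j.2) - C (z j.1 (i j.1 j.2)) : MvPolynomial (Fin n) ℂ).totalDegree ≤ 1 := by
      intro j _
      rw [sub_eq_add_neg, ← C_neg]
      refine le_trans (MvPolynomial.totalDegree_add _ _) ?_
      simp [MvPolynomial.totalDegree_X]
    refine le_trans (Finset.sum_le_sum hfac) ?_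
    simp [Finset.card_erase_of_mem]
  have hev : ∀ m, eval (z m) p
      = ∏ j ∈ (Finset.univ.erase k₀).attach,
          (z m (i j.1 j.2) - z j.1 (i j.1 j.2)) := by
    intro m
    rw [hpdef, map_prod]
    exact Finset.prod_congr rfl fun j _ => by simp
  have hev0 : ∀ m, m ≠ k₀ → eval (z m) p = 0 := by
    intro m hm
    rw [hev]
    refine Finset.prod_eq_zero (i := ⟨m, Finset.mem_erase.mpr ⟨hm, Finset.mem_univ m⟩⟩)
      (Finset.mem_attach _ _) ?_
    simp
  have hevne : eval (z k₀) p ≠ 0 := by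
    rw [hev]
    refine Finset.prod_ne_zero_iff.mpr fun j _ => ?_
    refine sub_ne_zero_of_ne fun h => (hi j.1 j.2) ?_
    rw [h]
  have hzero : ∀ m ∈ Finset.univ, m ≠ k₀ → c m * eval (z m) p = 0 := by
    intro m _ hm; rw [hev0 m hm, mul_zero]
  have := key p hdeg
  rw [Finset.sum_eq_single_of_mem k₀ (Finset.mem_univ k₀) hzero] at this
  exact (mul_eq_zero.mp this).resolve_right hevne
end

section
/- Let y = (y_{α,β})_{0≤α,β≤d} be a Hermitian Toeplitz matrix of complex numbers (y_{α,β} depends only on α-β and y_{β,α} = conj(y_{α,β})) that is positive semidefinite, and suppose the truncated matrix M_{d-1} = (y_{α,β})_{0≤α,β≤d-1} has the same rank r as M_d = (y_{α,β})_{0≤α,β≤d}. Factor M_d = X*X with X ∈ ℂ^{r×(d+1)} and columns x₀,…,x_d. Then there exists a unitary matrix T ∈ ℂ^{r×r} such that T x_α = x_{α+1} for all 0 ≤ α ≤ d-1. -/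
open Matrix
open scoped ComplexOrder

lemma aux_isUnit_det_of_rank_eq {n : ℕ} (M : Matrix (Fin n) (Fin n) ℂ)
    (h : M.rank = n) : IsUnit M.det := by
  have hsurj : Function.Surjective M.mulVecLin := by
    rw [← LinearMap.range_eq_top]
    apply Submodule.eq_top_of_finrank_eq
    rw [Matrix.rank] at h
    simpa using h
  have hinj : Function.Injective M.mulVecLin :=
    (LinearMap.injective_iff_surjective).2 hsurj
  rw [isUnit_iff_ne_zero]
  intro hdet
  obtain ⟨v, hv, hMv⟩ := Matrix.exists_mulVec_eq_zero_iff.2 hdet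
  exact hv (hinj (by simpa using hMv))

theorem toeplitz_psd_rank_preserving_unitary_shift
    (d r : ℕ) (y : Matrix (Fin (d + 1)) (Fin (d + 1)) ℂ)
    (hherm : y.IsHermitian)
    (htoep : ∀ α β : Fin d, y α.succ β.succ = y α.castSucc β.castSucc)
    (hpsd : y.PosSemidef)
    (hrank : y.rank = r)
    (hrank' : (y.submatrix (Fin.castSucc) (Fin.castSucc)).rank = r)
    (X : Matrix (Fin r) (Fin (d + 1)) ℂ) (hX : y = Xᴴ * X) :
    ∃ T : Matrix (Fin r) (Fin r) ℂ, Tᴴ * T = 1 ∧ T * Tᴴ = 1 ∧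
      ∀ α : Fin d, T *ᵥ (fun i => X i α.castSucc) = (fun i => X i α.succ) := by
  set A : Matrix (Fin r) (Fin d) ℂ := X.submatrix id Fin.castSucc with hA
  set B : Matrix (Fin r) (Fin d) ℂ := X.submatrix id Fin.succ with hB
  have hAA : Aᴴ * A = y.submatrix Fin.castSucc Fin.castSucc := by
    ext i j
    simp [hA, Matrix.mul_apply, hX, Matrix.conjTranspose_apply]
  have hBBy : Bᴴ * B = y.submatrix Fin.succ Fin.succ := by
    ext i j
    simp [hB, Matrix.mul_apply, hX, Matrix.conjTranspose_apply]
  have hBA : Bᴴ * B = Aᴴ * A := by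
    rw [hAA, hBBy]
    ext i j
    exact htoep i j
  set G : Matrix (Fin r) (Fin r) ℂ := A * Aᴴ with hG
  have hrankA : (Aᴴ * A).rank = r := by rw [hAA]; exact hrank'
  have hrankG : G.rank = r := by
    rw [hG, Matrix.rank_self_mul_conjTranspose, ← Matrix.rank_conjTranspose_mul_self, hrankA]
  have hGdet : IsUnit G.det := aux_isUnit_det_of_rank_eq G hrankG
  have hGinv : G * G⁻¹ = 1 := Matrix.mul_nonsing_inv G hGdet
  have hGinv' : G⁻¹ * G = 1 := Matrix.nonsing_inv_mul G hGdet
  have hGherm : Gᴴ = G := by rw [hG, Matrix.conjTranspose_mul, Matrix.conjTranspose_conjTranspose]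
  have hGinvherm : (G⁻¹)ᴴ = G⁻¹ := by
    rw [Matrix.conjTranspose_nonsing_inv, hGherm]
  set T : Matrix (Fin r) (Fin r) ℂ := B * Aᴴ * G⁻¹ with hT
  have h1 : A * (Bᴴ * (B * (Aᴴ * G⁻¹))) = G * (G * G⁻¹) := by
    have : A * (Bᴴ * B) * Aᴴ * G⁻¹ = G * (G * G⁻¹) := by
      rw [hBA, hG]
      simp only [Matrix.mul_assoc]
    rw [← this]
    simp only [Matrix.mul_assoc]
  have hTT : Tᴴ * T = 1 := by
    calc Tᴴ * T = G⁻¹ * (A * (Bᴴ * (B * (Aᴴ * G⁻¹)))) := by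
          rw [hT]
          simp only [Matrix.conjTranspose_mul, Matrix.conjTranspose_conjTranspose, hGinvherm,
            Matrix.mul_assoc]
      _ = G⁻¹ * (G * (G * G⁻¹)) := by rw [h1]
      _ = 1 := by rw [hGinv, Matrix.mul_one, hGinv']
  have hAQ : A * (1 - Aᴴ * G⁻¹ * A) = 0 := by
    rw [Matrix.mul_sub, Matrix.mul_one, sub_eq_zero]
    have : A * (Aᴴ * G⁻¹ * A) = A * Aᴴ * G⁻¹ * A := by simp only [Matrix.mul_assoc]
    rw [this, ← hG, hGinv, Matrix.one_mul]
  have hQherm : (1 - Aᴴ * G⁻¹ * A)ᴴ = 1 - Aᴴ * G⁻¹ * A := by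
    simp only [Matrix.conjTranspose_sub, Matrix.conjTranspose_one, Matrix.conjTranspose_mul,
      Matrix.conjTranspose_conjTranspose, hGinvherm, Matrix.mul_assoc]
  have hBQ : B * (1 - Aᴴ * G⁻¹ * A) = 0 := by
    have hCzero : (B * (1 - Aᴴ * G⁻¹ * A))ᴴ * (B * (1 - Aᴴ * G⁻¹ * A)) = 0 := by
      calc (B * (1 - Aᴴ * G⁻¹ * A))ᴴ * (B * (1 - Aᴴ * G⁻¹ * A))
          = (1 - Aᴴ * G⁻¹ * A)ᴴ * ((Bᴴ * B) * (1 - Aᴴ * G⁻¹ * A)) := by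
            simp only [Matrix.conjTranspose_mul, Matrix.mul_assoc]
        _ = (1 - Aᴴ * G⁻¹ * A)ᴴ * (Aᴴ * (A * (1 - Aᴴ * G⁻¹ * A))) := by
            rw [hBA]; simp only [Matrix.mul_assoc]
        _ = 0 := by rw [hAQ, Matrix.mul_zero, Matrix.mul_zero]
    exact Matrix.conjTranspose_mul_self_eq_zero.mp hCzero
  have hBP : B * (Aᴴ * G⁻¹ * A) = B := by
    rw [Matrix.mul_sub, Matrix.mul_one, sub_eq_zero] at hBQ
    exact hBQ.symm
  have hTA : T * A = B := by
    calc T * A = B * (Aᴴ * G⁻¹ * A) := by rw [hT]; simp only [Matrix.mul_assoc]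
      _ = B := hBP
  refine ⟨T, hTT, mul_eq_one_comm.mp hTT, fun α => ?_⟩
  funext i
  have h := congrFun (congrFun hTA i) α
  simp only [Matrix.mul_apply, hA, hB, Matrix.submatrix_apply, id] at h
  simpa [Matrix.mulVec, dotProduct] using h
end

section
/- Let T₁,…,Tₙ ∈ ℂ^{r×r} satisfy Tᵢ = P Dᵢ Pᵀ where P is complex orthogonal (PᵀP = PPᵀ = I) and each Dᵢ is diagonal. For x₀ ∈ ℂ^r and α ∈ ℕⁿ set x_α := T^α x₀ and y_{α+β} := x_αᵀ x_β. Then y_{α+β} = Σ_{k=1}^r (x₀ᵀ p_k)² d_k^{α+β}, where p_k are the columns of P and d_k = ((D₁)_{kk},…,(Dₙ)_{kk}); in particular y_{α+β} only depends on the sum α+β (Hankel structure) and y is represented by the complex atomic measure Σ_k (x₀ᵀ p_k)² δ_{d_k}. -/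
open Matrix

private lemma takagiAux_conj_list_prod {r : ℕ} (P : Matrix (Fin r) (Fin r) ℂ)
    (h1 : Pᵀ * P = 1) (h2 : P * Pᵀ = 1) :
    ∀ l : List (Matrix (Fin r) (Fin r) ℂ),
      (l.map fun A => P * A * Pᵀ).prod = P * l.prod * Pᵀ := by
  intro l
  induction l with
  | nil => simp [h2]
  | cons a l ih =>
      simp only [List.map_cons, List.prod_cons, ih]
      calc (P * a * Pᵀ) * (P * l.prod * Pᵀ)
          = P * a * (Pᵀ * P) * l.prod * Pᵀ := by simp only [mul_assoc]
        _ = P * (a * l.prod) * Pᵀ := by rw [h1]; simp only [mul_one, mul_assoc]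

private lemma takagiAux_conj_pow {r : ℕ} (P : Matrix (Fin r) (Fin r) ℂ)
    (h1 : Pᵀ * P = 1) (h2 : P * Pᵀ = 1) (A : Matrix (Fin r) (Fin r) ℂ) :
    ∀ m : ℕ, (P * A * Pᵀ) ^ m = P * A ^ m * Pᵀ := by
  intro m
  induction m with
  | zero => simp [h2]
  | succ m ih =>
      rw [pow_succ, pow_succ, ih]
      calc (P * A ^ m * Pᵀ) * (P * A * Pᵀ)
          = P * A ^ m * (Pᵀ * P) * A * Pᵀ := by simp only [mul_assoc]
        _ = P * (A ^ m * A) * Pᵀ := by rw [h1]; simp only [mul_one, mul_assoc]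

private lemma takagiAux_diag_list_prod {r n : ℕ} (g : Fin n → Fin r → ℂ) :
    (List.ofFn (fun i => Matrix.diagonal (g i))).prod =
      Matrix.diagonal (fun k => ∏ i, g i k) := by
  have h : (List.ofFn (fun i => Matrix.diagonal (g i))) =
      (List.ofFn g).map (Matrix.diagonalRingHom (Fin r) ℂ) := by
    rw [List.map_ofFn]; rfl
  rw [h, ← map_list_prod (Matrix.diagonalRingHom (Fin r) ℂ), List.prod_ofFn]
  show Matrix.diagonal (∏ i, g i) = _
  have hp : (∏ i, g i) = fun k => ∏ i, g i k := by
    funext k; rw [Finset.prod_apply]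
  rw [hp]

theorem takagi_shifts_hankel_moments_atomic_measure
    (n r : ℕ) (T : Fin n → Matrix (Fin r) (Fin r) ℂ)
    (P : Matrix (Fin r) (Fin r) ℂ) (hP : Pᵀ * P = 1 ∧ P * Pᵀ = 1)
    (D : Fin n → Matrix (Fin r) (Fin r) ℂ) (hD : ∀ i, (D i).IsDiag)
    (hT : ∀ i, T i = P * D i * Pᵀ)
    (x₀ : Fin r → ℂ) :
    (∀ α β : Fin n → ℕ,
      ((List.ofFn (fun i => T i ^ α i)).prod *ᵥ x₀) ⬝ᵥ
          ((List.ofFn (fun i => T i ^ β i)).prod *ᵥ x₀) =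
        ∑ k, (x₀ ⬝ᵥ (fun i => P i k)) ^ 2 * ∏ i, (D i k k) ^ (α i + β i)) ∧
    (∀ α β α' β' : Fin n → ℕ, α + β = α' + β' →
      ((List.ofFn (fun i => T i ^ α i)).prod *ᵥ x₀) ⬝ᵥ
          ((List.ofFn (fun i => T i ^ β i)).prod *ᵥ x₀) =
        ((List.ofFn (fun i => T i ^ α' i)).prod *ᵥ x₀) ⬝ᵥ
          ((List.ofFn (fun i => T i ^ β' i)).prod *ᵥ x₀)) := by
  obtain ⟨h1, h2⟩ := hP
  -- the shift product is a conjugated diagonal matrix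
  have hM : ∀ α : Fin n → ℕ,
      (List.ofFn (fun i => T i ^ α i)).prod =
        P * Matrix.diagonal (fun k => ∏ i, (D i k k) ^ α i) * Pᵀ := by
    intro α
    have hTi : ∀ i, T i ^ α i = P * Matrix.diagonal ((D i).diag ^ α i) * Pᵀ := by
      intro i
      have hpow : D i ^ α i = Matrix.diagonal ((D i).diag ^ α i) := by
        rw [← Matrix.diagonal_pow, (hD i).diagonal_diag]
      rw [hT i, takagiAux_conj_pow P h1 h2, hpow]
    have h : (List.ofFn (fun i => T i ^ α i)) =
        (List.ofFn (fun i => Matrix.diagonal ((D i).diag ^ α i))).map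
          (fun A => P * A * Pᵀ) := by
      rw [List.map_ofFn]
      congr 1
      funext i
      exact hTi i
    rw [h, takagiAux_conj_list_prod P h1 h2, takagiAux_diag_list_prod]
    rfl
  -- the key dot-product computation
  have key : ∀ α β : Fin n → ℕ,
      ((List.ofFn (fun i => T i ^ α i)).prod *ᵥ x₀) ⬝ᵥ
          ((List.ofFn (fun i => T i ^ β i)).prod *ᵥ x₀) =
        ∑ k, (x₀ ⬝ᵥ (fun i => P i k)) ^ 2 * ∏ i, (D i k k) ^ (α i + β i) := by
    intro α β
    rw [hM α, hM β]
    set e : Fin r → ℂ := fun k => ∏ i, (D i k k) ^ α i with he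
    set f : Fin r → ℂ := fun k => ∏ i, (D i k k) ^ β i with hf
    set w : Fin r → ℂ := Pᵀ *ᵥ x₀ with hw
    have hsplit : ∀ g : Fin r → ℂ,
        (P * Matrix.diagonal g * Pᵀ) *ᵥ x₀ = P *ᵥ (fun k => g k * w k) := by
      intro g
      rw [← Matrix.mulVec_mulVec, ← Matrix.mulVec_mulVec]
      refine congrArg _ (funext fun k => ?_)
      simp [Matrix.mulVec, dotProduct, Matrix.diagonal, hw,
        Finset.mul_sum]
    rw [hsplit e, hsplit f]
    -- orthogonality: (P *ᵥ u) ⬝ᵥ (P *ᵥ v) = u ⬝ᵥ v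
    have horth : ∀ u v : Fin r → ℂ, (P *ᵥ u) ⬝ᵥ (P *ᵥ v) = u ⬝ᵥ v := by
      intro u v
      rw [Matrix.dotProduct_mulVec, ← Matrix.vecMul_transpose,
        Matrix.vecMul_vecMul, h1, Matrix.vecMul_one]
    rw [horth]
    have hwk : ∀ k, w k = x₀ ⬝ᵥ (fun i => P i k) := by
      intro k
      simp [hw, Matrix.mulVec, dotProduct, Matrix.transpose, mul_comm]
    show (∑ k, (e k * w k) * (f k * w k)) = _
    refine Finset.sum_congr rfl fun k _ => ?_
    rw [← hwk k]
    have hef : ∏ i, (D i k k) ^ (α i + β i) = e k * f k := by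
      simp [he, hf, pow_add, Finset.prod_mul_distrib]
    rw [hef]
    ring
  refine ⟨key, fun α β α' β' h => ?_⟩
  rw [key α β, key α' β']
  refine Finset.sum_congr rfl fun k _ => ?_
  congr 1
  refine Finset.prod_congr rfl fun i _ => ?_
  have hi := congrFun h i
  simp only [Pi.add_apply] at hi
  rw [hi]
end

section
/- Suppose shifts T₁,…,Tₙ ∈ ℂ^{r×r} and vectors (x_α)_{|α|≤d} in ℂ^r satisfy x_αᵀ x_β = y_{α+β} (y depending only on α+β), T_k x_α = x_{α+e_k} for |α| ≤ d-1, and span{x_α : |α| ≤ d-1} = ℂ^r. Then each T_k is complex symmetric: T_kᵀ = T_k. -/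
open Matrix

theorem hankel_shifts_are_complex_symmetric
    (n r d : ℕ) (T : Fin n → Matrix (Fin r) (Fin r) ℂ)
    (x : (Fin n → ℕ) → (Fin r → ℂ)) (y : (Fin n → ℕ) → ℂ)
    (hhankel : ∀ α β : Fin n → ℕ, ∑ i, α i ≤ d → ∑ i, β i ≤ d →
      x α ⬝ᵥ x β = y (α + β))
    (hshift : ∀ (k : Fin n) (α : Fin n → ℕ), ∑ i, α i ≤ d - 1 →
      T k *ᵥ x α = x (α + Pi.single k 1))
    (hspan : Submodule.span ℂ {v | ∃ α : Fin n → ℕ, ∑ i, α i ≤ d - 1 ∧ v = x α} = ⊤) :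
    ∀ k, (T k)ᵀ = T k := by
  intro k
  suffices h : ∀ u v : Fin r → ℂ, u ⬝ᵥ (T k *ᵥ v) = (T k *ᵥ u) ⬝ᵥ v by
    ext i j
    have := h (Pi.single j 1) (Pi.single i 1)
    simpa [dotProduct, mulVec, Pi.single_apply, Finset.sum_ite_eq',
      Finset.mul_sum, Finset.sum_mul, mul_comm] using this
  intro u v
  have hu : u ∈ Submodule.span ℂ {v | ∃ α : Fin n → ℕ, ∑ i, α i ≤ d - 1 ∧ v = x α} := by
    rw [hspan]; trivial
  have hv : v ∈ Submodule.span ℂ {v | ∃ α : Fin n → ℕ, ∑ i, α i ≤ d - 1 ∧ v = x α} := by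
    rw [hspan]; trivial
  induction hu, hv using Submodule.span_induction₂ with
  | mem_mem u v hu hv =>
    obtain ⟨α, hα, rfl⟩ := hu
    obtain ⟨β, hβ, rfl⟩ := hv
    rcases Nat.eq_zero_or_pos d with hd | hd
    · subst hd
      have hα0 : α = 0 := by
        funext i
        have := Finset.sum_eq_zero_iff.mp (Nat.le_zero.mp hα) i (Finset.mem_univ i)
        simpa using this
      have hβ0 : β = 0 := by
        funext i
        have := Finset.sum_eq_zero_iff.mp (Nat.le_zero.mp hβ) i (Finset.mem_univ i)
        simpa using this
      subst hα0; subst hβ0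
      exact dotProduct_comm _ _
    · rw [hshift k α hα, hshift k β hβ]
      have hs : ∑ i, Pi.single (M := fun _ => ℕ) k 1 i = 1 := by simp
      have h1 : ∑ i, (β + Pi.single k 1 : Fin n → ℕ) i ≤ d := by
        simpa [Finset.sum_add_distrib, hs] using
          Nat.add_le_of_le_sub hd hβ
      have h2 : ∑ i, (α + Pi.single k 1 : Fin n → ℕ) i ≤ d := by
        simpa [Finset.sum_add_distrib, hs] using
          Nat.add_le_of_le_sub hd hα
      rw [hhankel α (β + Pi.single k 1) (le_trans hα (Nat.sub_le d 1)) h1,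
        hhankel (α + Pi.single k 1) β h2 (le_trans hβ (Nat.sub_le d 1))]
      ring_nf
  | zero_left v hv => simp
  | zero_right u hu => simp
  | add_left u₁ u₂ v h1 h2 h3 ih1 ih2 => simp [add_dotProduct, Matrix.mulVec_add, ih1, ih2]
  | add_right u v₁ v₂ h1 h2 h3 ih1 ih2 => simp [dotProduct_add, Matrix.mulVec_add, ih1, ih2]
  | smul_left c u v h1 h2 ih => simp [smul_dotProduct, Matrix.mulVec_smul, ih]
  | smul_right c u v h1 h2 ih => simp [dotProduct_smul, Matrix.mulVec_smul, ih]
end
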